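/- Let l be a prime, let R be a commutative ring in which l is invertible, let C_l be the cyclic group of order l with generator c, let G = Aut(C_l) ≅ (ℤ/lℤ)^×, and let Γ = C_l ⋊ G. Let V be an R-module with an R-linear action of Γ such that Σ_{i=0}^{l−1} c^i v = 0 for all v ∈ V. Then the map α : V → V^G ⊗_R R[C_l] defined by α(v) = Σ_{i=0}^{l−1} ( Σ_{σ∈G} σ·(c^{−i}·v) ) ⊗ c^i is a well-defined homomorphism of C_l-modules, where C_l acts on the target through left multiplication on the group-algebra factor R[C_l], and the sequence 0 → V →^α V^G ⊗_R R[C_l] →^{id⊗aug} V^G → 0 is a short exact sequence of C_l-modules which admits a C_l-equivariant splitting. -/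

import Mathlib

open Multiplicative

namespace Stmt3Aux

variable {l : ℕ} [NeZero l]

noncomputable def uof (σ : MulAut (Multiplicative (ZMod l))) : ZMod l := (σ (ofAdd 1)).toAdd

lemma aut_apply (σ : MulAut (Multiplicative (ZMod l))) (i : ZMod l) :
    σ (ofAdd i) = ofAdd (i * uof σ) := by
  have h1 : ((i.val : ℕ) : ZMod l) = i := ZMod.natCast_rightInverse i
  have h2 : ofAdd i = ofAdd (1 : ZMod l) ^ i.val := by
    rw [← ofAdd_nsmul, nsmul_eq_mul, mul_one, h1]
  have h3 : σ (ofAdd (1 : ZMod l)) = ofAdd (uof σ) := rfl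
  rw [h2, map_pow, h3, ← ofAdd_nsmul, nsmul_eq_mul, h1]

lemma uof_injective : Function.Injective (uof (l := l)) := by
  intro σ τ h
  apply MulEquiv.ext
  intro g
  have : g = ofAdd g.toAdd := rfl
  rw [this, aut_apply, aut_apply, h]

lemma uof_mul (σ τ : MulAut (Multiplicative (ZMod l))) : uof (σ * τ) = uof τ * uof σ := by
  show ((σ * τ) (ofAdd (1 : ZMod l))).toAdd = _
  rw [show (σ * τ) (ofAdd (1 : ZMod l)) = σ (τ (ofAdd 1)) from rfl,
    show τ (ofAdd (1 : ZMod l)) = ofAdd (uof τ) from rfl, aut_apply]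
  rfl

lemma uof_one : uof (1 : MulAut (Multiplicative (ZMod l))) = 1 := by
  simp [uof]

/-- `uof` as an equiv to the units. -/
noncomputable def autEquivUnits : MulAut (Multiplicative (ZMod l)) ≃ (ZMod l)ˣ where
  toFun σ := ⟨uof σ, uof σ⁻¹, by rw [← uof_mul, inv_mul_cancel, uof_one],
    by rw [← uof_mul, mul_inv_cancel, uof_one]⟩
  invFun u := AddEquiv.toMultiplicative (AddAut.mulLeft u)
  left_inv σ := by
    apply uof_injective
    show uof (AddEquiv.toMultiplicative (AddAut.mulLeft ⟨uof σ, _, _, _⟩)) = uof σ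
    simp [uof, AddEquiv.toMultiplicative, AddAut.mulLeft, Units.smul_def, smul_eq_mul]
  right_inv u := by
    ext
    show uof (AddEquiv.toMultiplicative (AddAut.mulLeft u)) = u
    simp [uof, AddEquiv.toMultiplicative, AddAut.mulLeft, Units.smul_def, smul_eq_mul]

lemma card_aut (hl : l.Prime) :
    Fintype.card (MulAut (Multiplicative (ZMod l))) = l - 1 := by
  rw [Fintype.card_congr (autEquivUnits (l := l)), ZMod.card_units_eq_totient,
    Nat.totient_prime hl]

lemma sum_aut (hl : l.Prime) (k : ZMod l) (hk : k ≠ 0) {A : Type*} [AddCommGroup A]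
    (f : ZMod l → A) :
    ∑ σ : MulAut (Multiplicative (ZMod l)), f (k * uof σ) = (∑ i : ZMod l, f i) - f 0 := by
  haveI := Fact.mk hl
  have k0 : IsUnit k := (Ne.isUnit hk)
  have h1 : ∑ σ : MulAut (Multiplicative (ZMod l)), f (k * uof σ)
      = ∑ u : (ZMod l)ˣ, f (k * u) :=
    Fintype.sum_equiv autEquivUnits _ _ (fun σ => rfl)
  have h2 : ∑ u : (ZMod l)ˣ, f (k * u) = ∑ u : (ZMod l)ˣ, f u :=
    Fintype.sum_bijective (fun u => k0.unit * u) (Group.mulLeft_bijective _)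
      (fun u => f (k * u)) (fun u => f u) (fun u => by simp [Units.val_mul, k0.unit_spec])
  have h3 : ∑ u : (ZMod l)ˣ, f (u : ZMod l) = ∑ x : {x : ZMod l // x ≠ 0}, f x :=
    Fintype.sum_equiv unitsEquivNeZero _ _ (fun u => rfl)
  have h4 : ∑ x : {x : ZMod l // x ≠ 0}, f (x : ZMod l)
      = ∑ x ∈ Finset.univ.erase (0 : ZMod l), f x := by
    refine (Finset.sum_subtype _ (fun x => ?_) f).symm
    simp
  have h5 : (∑ x ∈ Finset.univ.erase (0 : ZMod l), f x) + f 0 = ∑ i : ZMod l, f i :=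
    Finset.sum_erase_add _ _ (Finset.mem_univ _)
  rw [h1, h2, h3, h4, eq_sub_iff_add_eq, h5]



section Rep

variable {R : Type*} [CommRing R] {V : Type*} [AddCommGroup V] [Module R V]
  (ρ : Representation R
      (Multiplicative (ZMod l) ⋊[MonoidHom.id (MulAut (Multiplicative (ZMod l)))]
        MulAut (Multiplicative (ZMod l))) V)

/-- action of `cⁱ` -/
noncomputable def cc (i : ZMod l) : Module.End R V := ρ (SemidirectProduct.inl (ofAdd i))

/-- action of `σ ∈ G` -/
noncomputable def ss (σ : MulAut (Multiplicative (ZMod l))) : Module.End R V :=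
  ρ (SemidirectProduct.inr σ)

lemma cc_cc (i j : ZMod l) (v : V) : cc ρ i (cc ρ j v) = cc ρ (i + j) v := by
  have : (SemidirectProduct.inl (ofAdd (i + j)) :
      Multiplicative (ZMod l) ⋊[MonoidHom.id (MulAut (Multiplicative (ZMod l)))]
        MulAut (Multiplicative (ZMod l))) =
      SemidirectProduct.inl (ofAdd i) * SemidirectProduct.inl (ofAdd j) := by
    rw [← map_mul, ← ofAdd_add]
  simp only [cc, this, map_mul, Module.End.mul_apply]

lemma cc_zero (v : V) : cc ρ 0 v = v := by
  simp only [cc, ofAdd_zero, map_one]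
  rfl

lemma ss_one (v : V) : ss ρ 1 v = v := by
  simp only [ss, map_one]
  rfl

lemma ss_cc (σ : MulAut (Multiplicative (ZMod l))) (i : ZMod l) (v : V) :
    ss ρ σ (cc ρ i v) = cc ρ (i * uof σ) (ss ρ σ v) := by
  have key : (SemidirectProduct.inr σ *
        SemidirectProduct.inl (ofAdd i) :
      Multiplicative (ZMod l) ⋊[MonoidHom.id (MulAut (Multiplicative (ZMod l)))]
        MulAut (Multiplicative (ZMod l))) =
      SemidirectProduct.inl (ofAdd (i * uof σ)) * SemidirectProduct.inr σ := by
    rw [← aut_apply σ i]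
    rw [show σ (ofAdd i) = (MonoidHom.id (MulAut (Multiplicative (ZMod l))) σ) (ofAdd i) from rfl]
    rw [SemidirectProduct.inl_aut, mul_assoc, ← map_mul, inv_mul_cancel, map_one, mul_one]
  have := congrArg ρ key
  rw [map_mul, map_mul] at this
  calc ss ρ σ (cc ρ i v) = (ρ (SemidirectProduct.inr σ) *
      ρ (SemidirectProduct.inl (ofAdd i))) v := rfl
  _ = (ρ (SemidirectProduct.inl (ofAdd (i * uof σ))) * ρ (SemidirectProduct.inr σ)) v := by
      rw [this]
  _ = cc ρ (i * uof σ) (ss ρ σ v) := rfl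

variable (hsum : ∀ v : V, ∑ i : ZMod l, cc ρ i v = 0)

include hsum

lemma hsum_neg (v : V) : ∑ i : ZMod l, cc ρ (-i) v = 0 := by
  rw [Fintype.sum_bijective (fun i : ZMod l => -i) (Equiv.neg (ZMod l)).bijective _ (fun i => cc ρ i v)
    (fun i => rfl)]
  exact hsum v

lemma hsum_mul (hl : l.Prime) (k : ZMod l) (hk : k ≠ 0) (v : V) :
    ∑ i : ZMod l, cc ρ (i * k) v = 0 := by
  haveI := Fact.mk hl
  rw [Fintype.sum_bijective (fun i : ZMod l => i * k)
    (mulRight_bijective₀ k hk) _ (fun i => cc ρ i v) (fun i => rfl)]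
  exact hsum v

/-- the key sum: `∑_σ σ (cᵏ y)` for a `G`-fixed vector `y`. -/
lemma sum_ss_cc (hl : l.Prime) (k : ZMod l) (y : V)
    (hy : ∀ σ : MulAut (Multiplicative (ZMod l)), ss ρ σ y = y) :
    ∑ σ : MulAut (Multiplicative (ZMod l)), ss ρ σ (cc ρ k y) =
      if k = 0 then (l - 1) • y else -y := by
  have h1 : ∀ σ : MulAut (Multiplicative (ZMod l)), ss ρ σ (cc ρ k y) = cc ρ (k * uof σ) y := by
    intro σ; rw [ss_cc, hy]
  rw [Finset.sum_congr rfl (fun σ _ => h1 σ)]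
  by_cases hk : k = 0
  · subst hk
    simp only [zero_mul, cc_zero, Finset.sum_const, Finset.card_univ, if_true]
    rw [card_aut hl]
  · rw [if_neg hk, sum_aut hl k hk (fun m => cc ρ m y), cc_zero, hsum y, zero_sub]

end Rep

section More

variable {l : ℕ} [NeZero l] {R : Type*} [CommRing R]

lemma unit_inv_smul {r : R} (hinv : IsUnit r) {A : Type*} [AddCommGroup A] [Module R A]
    (y : A) : (↑hinv.unit⁻¹ : R) • (r • y) = y := by
  rw [smul_smul, IsUnit.val_inv_mul, one_smul]

lemma coords {A : Type*} [AddCommGroup A] [Module R A] (w : ZMod l → A) (j : ZMod l) :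
    TensorProduct.finsuppScalarRight R R A (Multiplicative (ZMod l))
      (∑ i : ZMod l, w i ⊗ₜ[R] Finsupp.single (ofAdd i) (1 : R)) (ofAdd j) = w j := by
  rw [map_sum, Finset.sum_apply']
  simp only [TensorProduct.finsuppScalarRight_apply_tmul_apply, Finsupp.single_apply,
    EmbeddingLike.apply_eq_iff_eq, ite_smul, one_smul, zero_smul]
  simp

lemma finsupp_eq_sum {A : Type*} [AddCommMonoid A] (f : Multiplicative (ZMod l) →₀ A) :
    f = ∑ j : ZMod l, Finsupp.single (ofAdd j) (f (ofAdd j)) := by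
  ext g
  rw [Finsupp.finset_sum_apply]
  have hg : g = ofAdd g.toAdd := rfl
  simp only [Finsupp.single_apply, Equiv.apply_eq_iff_eq_symm_apply]
  rw [Finset.sum_ite_eq' Finset.univ (Multiplicative.ofAdd.symm g) (fun x => f (ofAdd x))]
  simp

end More

end Stmt3Aux

open Stmt3Aux Multiplicative in
open scoped TensorProduct in
/-- Let `l` be a prime invertible in the commutative ring `R`, `C_l` the cyclic group
of order `l` with generator `c`, `G = Aut(C_l)`, `Γ = C_l ⋊ G`, and let `V` be an
`R`-linear representation of `Γ` with `∑_{i=0}^{l-1} cⁱ·v = 0` for all `v`.  Then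
`α : V → V^G ⊗_R R[C_l]`, `v ↦ ∑ᵢ (∑_{σ∈G} σ·(c⁻ⁱ·v)) ⊗ cⁱ`, is a well-defined
homomorphism of `C_l`-modules and `0 → V → V^G ⊗ R[C_l] → V^G → 0` (with second map
`id ⊗ aug`) is a short exact sequence of `C_l`-modules admitting a `C_l`-equivariant
splitting. -/
theorem stmt_3 (l : ℕ) (hl : l.Prime) [NeZero l]
    (R : Type*) [CommRing R] (hinv : IsUnit (l : R))
    (V : Type*) [AddCommGroup V] [Module R V]
    (ρ : Representation R
      (Multiplicative (ZMod l) ⋊[MonoidHom.id (MulAut (Multiplicative (ZMod l)))]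
        MulAut (Multiplicative (ZMod l))) V)
    (hsum : ∀ v : V, ∑ i : ZMod l, ρ (SemidirectProduct.inl (Multiplicative.ofAdd i)) v = 0)
    (VG : Submodule R V)
    (hVG : VG = ⨅ σ : MulAut (Multiplicative (ZMod l)),
      LinearMap.ker (ρ (SemidirectProduct.inr σ) - LinearMap.id))
    (α : V →ₗ[R] (↥VG) ⊗[R] (Multiplicative (ZMod l) →₀ R))
    (hα : ∀ v : V,
      TensorProduct.map VG.subtype LinearMap.id (α v) =
        ∑ i : ZMod l,
          (∑ σ : MulAut (Multiplicative (ZMod l)),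
              ρ (SemidirectProduct.inr σ)
                (ρ (SemidirectProduct.inl (Multiplicative.ofAdd (-i))) v))
            ⊗ₜ[R] Finsupp.single (Multiplicative.ofAdd i) (1 : R))
    (aug : (Multiplicative (ZMod l) →₀ R) →ₗ[R] R)
    (haug : ∀ (a : Multiplicative (ZMod l)) (r : R), aug (Finsupp.single a r) = r)
    (β : (↥VG) ⊗[R] (Multiplicative (ZMod l) →₀ R) →ₗ[R] VG)
    (hβ : β = (TensorProduct.rid R VG).toLinearMap ∘ₗ TensorProduct.map LinearMap.id aug) :
    Function.Injective α ∧
    LinearMap.range α = LinearMap.ker β ∧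
    Function.Surjective β ∧
    (∀ (a : Multiplicative (ZMod l)) (v : V),
      α (ρ (SemidirectProduct.inl a) v) =
        TensorProduct.map LinearMap.id (Finsupp.lmapDomain R R (a * ·)) (α v)) ∧
    (∀ (a : Multiplicative (ZMod l)) (x : (↥VG) ⊗[R] (Multiplicative (ZMod l) →₀ R)),
      β (TensorProduct.map LinearMap.id (Finsupp.lmapDomain R R (a * ·)) x) = β x) ∧
    ∃ s : VG →ₗ[R] (↥VG) ⊗[R] (Multiplicative (ZMod l) →₀ R),
      β ∘ₗ s = LinearMap.id ∧
      ∀ (a : Multiplicative (ZMod l)) (w : VG),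
        TensorProduct.map LinearMap.id (Finsupp.lmapDomain R R (a * ·)) (s w) = s w := by
  haveI := Fact.mk hl
  classical
  have hsum' : ∀ v : V, ∑ i : ZMod l, cc ρ i v = 0 := hsum
  set W : V → ZMod l → V := fun v i => ∑ σ : MulAut (Multiplicative (ZMod l)),
      ss ρ σ (cc ρ (-i) v) with hW
  have hα' : ∀ v : V, TensorProduct.map VG.subtype LinearMap.id (α v)
      = ∑ i : ZMod l, (W v i) ⊗ₜ[R] Finsupp.single (ofAdd i) (1 : R) := hα
  have hTinj : Function.Injective (TensorProduct.map VG.subtype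
      (LinearMap.id : (Multiplicative (ZMod l) →₀ R) →ₗ[R] (Multiplicative (ZMod l) →₀ R))) :=
    Module.Flat.rTensor_preserves_injective_linearMap VG.subtype VG.injective_subtype
  have hfix : ∀ (y : VG) (σ : MulAut (Multiplicative (ZMod l))), ss ρ σ (y : V) = y := by
    intro y σ
    have hy : (y : V) ∈ ⨅ σ : MulAut (Multiplicative (ZMod l)),
        LinearMap.ker (ρ (SemidirectProduct.inr σ) - LinearMap.id) := by
      rw [← hVG]; exact y.2
    rw [Submodule.mem_iInf] at hy
    have h := hy σ
    rw [LinearMap.mem_ker, LinearMap.sub_apply, LinearMap.id_apply, sub_eq_zero] at h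
    exact h
  have hext : ∀ (v : V) (j : ZMod l), α v = 0 → W v j = 0 := by
    intro v j hv
    have h0 : (∑ i : ZMod l, (W v i) ⊗ₜ[R] Finsupp.single (ofAdd i) (1 : R))
        = (0 : V ⊗[R] (Multiplicative (ZMod l) →₀ R)) := by
      rw [← hα' v, hv, map_zero]
    have h1 := coords (R := R) (W v) j
    rw [h0, map_zero] at h1
    simpa using h1.symm
  -- injectivity
  have hker0 : ∀ v : V, α v = 0 → v = 0 := by
    intro v hv
    have hWv : ∀ i, W v i = 0 := fun i => hext v i hv
    have e1 : ∀ i : ZMod l, cc ρ i (W v i) = ∑ σ : MulAut (Multiplicative (ZMod l)),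
        cc ρ (i * (1 - uof σ)) (ss ρ σ v) := by
      intro i
      simp only [hW]
      rw [map_sum]
      refine Finset.sum_congr rfl fun σ _ => ?_
      rw [ss_cc, cc_cc, show i + -i * uof σ = i * (1 - uof σ) by ring]
    have e2 : ∑ i : ZMod l, cc ρ i (W v i) = (l : ℕ) • v := by
      rw [Finset.sum_congr rfl fun i (_ : i ∈ Finset.univ) => e1 i, Finset.sum_comm]
      have hz : ∀ σ ∈ Finset.univ, σ ≠ (1 : MulAut (Multiplicative (ZMod l))) →
          ∑ i : ZMod l, cc ρ (i * (1 - uof σ)) (ss ρ σ v) = 0 := by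
        intro σ _ hσ
        have hu : (1 : ZMod l) - uof σ ≠ 0 := by
          intro h
          apply hσ
          apply uof_injective
          rw [uof_one]
          exact (sub_eq_zero.mp h).symm
        exact hsum_mul (ρ := ρ) (hsum := hsum') hl _ hu (ss ρ σ v)
      rw [Finset.sum_eq_single_of_mem (1 : MulAut (Multiplicative (ZMod l)))
        (Finset.mem_univ _) hz]
      simp only [uof_one, sub_self, mul_zero, cc_zero]
      rw [Finset.sum_congr rfl fun i (_ : i ∈ Finset.univ) => by rw [ss_one]]
      rw [Finset.sum_const, Finset.card_univ, ZMod.card]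
    have e3 : (l : ℕ) • v = 0 := by
      rw [← e2, Finset.sum_congr rfl fun i (_ : i ∈ Finset.univ) => by rw [hWv i, map_zero]]
      simp
    have e4 : (l : R) • v = 0 := by rw [Nat.cast_smul_eq_nsmul]; exact e3
    calc v = (↑hinv.unit⁻¹ : R) • ((l : R) • v) := (unit_inv_smul hinv v).symm
    _ = 0 := by rw [e4, smul_zero]
  have hinj : Function.Injective α := by
    intro v₁ v₂ h
    have := hker0 (v₁ - v₂) (by rw [map_sub, h, sub_self])
    exact sub_eq_zero.mp this
  -- equivariance of α
  have hcomm : ∀ a : Multiplicative (ZMod l),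
      (TensorProduct.map VG.subtype LinearMap.id).comp
        (TensorProduct.map LinearMap.id (Finsupp.lmapDomain R R (a * ·)))
      = (TensorProduct.map LinearMap.id (Finsupp.lmapDomain R R (a * ·))).comp
        (TensorProduct.map VG.subtype LinearMap.id) := by
    intro a
    apply TensorProduct.ext'
    intro m f
    simp
  have hequiv : ∀ (a : Multiplicative (ZMod l)) (v : V),
      α (ρ (SemidirectProduct.inl a) v)
        = TensorProduct.map LinearMap.id (Finsupp.lmapDomain R R (a * ·)) (α v) := by
    intro a v
    apply hTinj
    have hρa : ρ (SemidirectProduct.inl a) v = cc ρ (toAdd a) v := rfl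
    rw [hρa, hα', ← LinearMap.comp_apply, hcomm a, LinearMap.comp_apply, hα', map_sum]
    have hsingle : ∀ i : ZMod l,
        TensorProduct.map LinearMap.id (Finsupp.lmapDomain R R (a * ·))
          ((W v i) ⊗ₜ[R] Finsupp.single (ofAdd i) (1 : R))
        = (W v i) ⊗ₜ[R] Finsupp.single (ofAdd (toAdd a + i)) (1 : R) := by
      intro i
      rw [TensorProduct.map_tmul, Finsupp.lmapDomain_apply, Finsupp.mapDomain_single]
      rfl
    rw [Finset.sum_congr rfl fun i (_ : i ∈ Finset.univ) => hsingle i]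
    have hWs : ∀ i : ZMod l, W (cc ρ (toAdd a) v) i = W v (i - toAdd a) := by
      intro i
      simp only [hW]
      refine Finset.sum_congr rfl fun σ _ => ?_
      rw [cc_cc, show -i + toAdd a = -(i - toAdd a) by ring]
    rw [Finset.sum_congr rfl fun i (_ : i ∈ Finset.univ) => by rw [hWs i]]
    exact (Fintype.sum_equiv (Equiv.addLeft (toAdd a))
      (fun i => (W v i) ⊗ₜ[R] Finsupp.single (ofAdd (toAdd a + i)) (1 : R))
      (fun i => (W v (i - toAdd a)) ⊗ₜ[R] Finsupp.single (ofAdd i) (1 : R))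
      (fun i => by simp)).symm
  -- β invariance
  have haugL : ∀ a : Multiplicative (ZMod l),
      aug ∘ₗ Finsupp.lmapDomain R R (a * ·) = aug := by
    intro a
    apply Finsupp.lhom_ext
    intro g r
    simp [haug]
  have hβinv : ∀ (a : Multiplicative (ZMod l))
      (x : (↥VG) ⊗[R] (Multiplicative (ZMod l) →₀ R)),
      β (TensorProduct.map LinearMap.id (Finsupp.lmapDomain R R (a * ·)) x) = β x := by
    intro a x
    rw [hβ]
    have hcmp : (TensorProduct.map (LinearMap.id : (↥VG) →ₗ[R] ↥VG) aug).comp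
        (TensorProduct.map LinearMap.id (Finsupp.lmapDomain R R (a * ·)))
        = TensorProduct.map LinearMap.id aug := by
      rw [← TensorProduct.map_comp, LinearMap.id_comp, haugL]
    have hc2 : ((TensorProduct.rid R ↥VG).toLinearMap ∘ₗ TensorProduct.map LinearMap.id aug) ∘ₗ
        TensorProduct.map LinearMap.id (Finsupp.lmapDomain R R (a * ·))
        = (TensorProduct.rid R ↥VG).toLinearMap ∘ₗ TensorProduct.map LinearMap.id aug := by
      rw [LinearMap.comp_assoc, hcmp]
    exact LinearMap.congr_fun hc2 x
  -- β ∘ α = 0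
  have hsub : VG.subtype ∘ₗ β = (TensorProduct.rid R V).toLinearMap ∘ₗ
      TensorProduct.map LinearMap.id aug ∘ₗ TensorProduct.map VG.subtype LinearMap.id := by
    rw [hβ]
    apply TensorProduct.ext'
    intro m f
    simp
  have hβα : ∀ v : V, β (α v) = 0 := by
    intro v
    apply VG.injective_subtype
    have h1 := LinearMap.congr_fun hsub (α v)
    simp only [LinearMap.comp_apply] at h1
    rw [hα', map_sum, map_sum] at h1
    have h2 : ∀ i : ZMod l, (TensorProduct.rid R V).toLinearMap
        (TensorProduct.map LinearMap.id aug ((W v i) ⊗ₜ[R] Finsupp.single (ofAdd i) (1:R)))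
        = W v i := by
      intro i
      rw [TensorProduct.map_tmul]
      simp [haug]
    rw [Finset.sum_congr rfl fun i (_ : i ∈ Finset.univ) => h2 i] at h1
    have h3 : ∑ i : ZMod l, W v i = 0 := by
      simp only [hW]
      rw [Finset.sum_comm]
      have h4 : ∀ σ : MulAut (Multiplicative (ZMod l)),
          ∑ i : ZMod l, ss ρ σ (cc ρ (-i) v) = 0 := by
        intro σ
        rw [← map_sum, hsum_neg (ρ := ρ) (hsum := hsum') v, map_zero]
      rw [Finset.sum_congr rfl fun σ (_ : σ ∈ Finset.univ) => h4 σ]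
      simp
    rw [h3] at h1
    simpa using h1
  -- ker β ⊆ range α
  have hpre : ∀ x : (↥VG) ⊗[R] (Multiplicative (ZMod l) →₀ R), β x = 0 → ∃ v, α v = x := by
    intro x hx
    set φ := TensorProduct.finsuppScalarRight R R (↥VG) (Multiplicative (ZMod l)) x with hφ
    have hxdec : x = ∑ j : ZMod l, (φ (ofAdd j)) ⊗ₜ[R] Finsupp.single (ofAdd j) (1 : R) := by
      have h0 := finsupp_eq_sum φ
      calc x = (TensorProduct.finsuppScalarRight R R (↥VG) (Multiplicative (ZMod l))).symm φ := by
            rw [hφ, LinearEquiv.symm_apply_apply]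
      _ = (TensorProduct.finsuppScalarRight R R (↥VG) (Multiplicative (ZMod l))).symm
            (∑ j : ZMod l, Finsupp.single (ofAdd j) (φ (ofAdd j))) := by rw [← h0]
      _ = ∑ j : ZMod l, (φ (ofAdd j)) ⊗ₜ[R] Finsupp.single (ofAdd j) (1 : R) := by
            rw [map_sum]
            exact Finset.sum_congr rfl fun j _ =>
              TensorProduct.finsuppScalarRight_symm_apply_single (ofAdd j) (φ (ofAdd j))
    have hsumφ : ∑ j : ZMod l, φ (ofAdd j) = 0 := by
      have hβx : β x = ∑ j : ZMod l, φ (ofAdd j) := by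
        conv_lhs => rw [hxdec]
        rw [map_sum]
        refine Finset.sum_congr rfl fun j _ => ?_
        rw [hβ]
        simp [haug]
      rw [← hβx]
      exact hx
    have hsumy : ∑ j : ZMod l, ((φ (ofAdd j) : VG) : V) = 0 := by
      have := congrArg VG.subtype hsumφ
      simpa using this
    refine ⟨(↑hinv.unit⁻¹ : R) • ∑ j : ZMod l, cc ρ j ((φ (ofAdd j) : VG) : V), ?_⟩
    apply hTinj
    rw [hα']
    have hx' : TensorProduct.map VG.subtype LinearMap.id x
        = ∑ j : ZMod l, ((φ (ofAdd j) : VG) : V) ⊗ₜ[R] Finsupp.single (ofAdd j) (1 : R) := by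
      conv_lhs => rw [hxdec]
      rw [map_sum]
      refine Finset.sum_congr rfl fun j _ => ?_
      rw [TensorProduct.map_tmul]
      rfl
    rw [hx']
    refine Finset.sum_congr rfl fun i _ => ?_
    congr 1
    simp only [hW]
    have hterm : ∀ σ : MulAut (Multiplicative (ZMod l)),
        ss ρ σ (cc ρ (-i) ((↑hinv.unit⁻¹ : R) •
          ∑ j : ZMod l, cc ρ j ((φ (ofAdd j) : VG) : V)))
        = (↑hinv.unit⁻¹ : R) • ∑ j : ZMod l,
            ss ρ σ (cc ρ (j - i) ((φ (ofAdd j) : VG) : V)) := by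
      intro σ
      rw [map_smul, map_smul, map_sum, map_sum]
      congr 1
      refine Finset.sum_congr rfl fun j _ => ?_
      rw [cc_cc, show -i + j = j - i by ring]
    rw [Finset.sum_congr rfl fun σ (_ : σ ∈ Finset.univ) => hterm σ, ← Finset.smul_sum,
      Finset.sum_comm]
    have hinner : ∀ j : ZMod l, ∑ σ : MulAut (Multiplicative (ZMod l)),
        ss ρ σ (cc ρ (j - i) ((φ (ofAdd j) : VG) : V))
        = if j = i then (l - 1) • ((φ (ofAdd j) : VG) : V) else -((φ (ofAdd j) : VG) : V) := by
      intro j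
      rw [sum_ss_cc (ρ := ρ) (hsum := hsum') hl (j - i) _ (fun σ => hfix (φ (ofAdd j)) σ)]
      simp [sub_eq_zero]
    rw [Finset.sum_congr rfl fun j (_ : j ∈ Finset.univ) => hinner j]
    have hsplit : ∀ j : ZMod l,
        (if j = i then (l - 1) • ((φ (ofAdd j) : VG) : V) else -((φ (ofAdd j) : VG) : V))
        = (if j = i then (l : ℕ) • ((φ (ofAdd j) : VG) : V) else 0)
          + (-((φ (ofAdd j) : VG) : V)) := by
      intro j
      by_cases h : j = i
      · rw [if_pos h, if_pos h]
        have hls : (l - 1) • ((φ (ofAdd j) : VG) : V) + ((φ (ofAdd j) : VG) : V)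
            = (l : ℕ) • ((φ (ofAdd j) : VG) : V) := by
          rw [← succ_nsmul, Nat.sub_add_cancel hl.one_lt.le]
        rw [← hls]
        abel
      · rw [if_neg h, if_neg h, zero_add]
    rw [Finset.sum_congr rfl fun j (_ : j ∈ Finset.univ) => hsplit j, Finset.sum_add_distrib,
      Finset.sum_ite_eq' Finset.univ i (fun j => (l : ℕ) • ((φ (ofAdd j) : VG) : V)),
      if_pos (Finset.mem_univ i),
      show ∑ j : ZMod l, -((φ (ofAdd j) : VG) : V) = 0 by
        rw [Finset.sum_neg_distrib, hsumy, neg_zero],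
      add_zero, ← Nat.cast_smul_eq_nsmul R, unit_inv_smul hinv]
  have hrange : LinearMap.range α = LinearMap.ker β := by
    apply le_antisymm
    · rintro x ⟨v, rfl⟩
      exact LinearMap.mem_ker.mpr (hβα v)
    · intro x hx
      obtain ⟨v, hv⟩ := hpre x (LinearMap.mem_ker.mp hx)
      exact ⟨v, hv⟩
  -- splitting
  have he : aug (∑ i : ZMod l, Finsupp.single (ofAdd i) (↑hinv.unit⁻¹ : R)) = 1 := by
    rw [map_sum, Finset.sum_congr rfl fun i (_ : i ∈ Finset.univ) => haug (ofAdd i) _,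
      Finset.sum_const, Finset.card_univ, ZMod.card, nsmul_eq_mul]
    exact hinv.mul_val_inv
  set s : VG →ₗ[R] (↥VG) ⊗[R] (Multiplicative (ZMod l) →₀ R) :=
    (TensorProduct.mk R (↥VG) (Multiplicative (ZMod l) →₀ R)).flip
      (∑ i : ZMod l, Finsupp.single (ofAdd i) (↑hinv.unit⁻¹ : R)) with hs
  have hβs : ∀ w : VG, β (s w) = w := by
    intro w
    rw [hs, hβ]
    simp only [LinearMap.flip_apply, TensorProduct.mk_apply, LinearMap.comp_apply,
      TensorProduct.map_tmul, LinearMap.id_coe, id_eq]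
    rw [he]
    simp
  have hse : ∀ a : Multiplicative (ZMod l),
      Finsupp.lmapDomain R R (a * ·)
          (∑ i : ZMod l, Finsupp.single (ofAdd i) (↑hinv.unit⁻¹ : R))
        = ∑ i : ZMod l, Finsupp.single (ofAdd i) (↑hinv.unit⁻¹ : R) := by
    intro a
    rw [map_sum, Finset.sum_congr rfl fun i (_ : i ∈ Finset.univ) => by
      rw [Finsupp.lmapDomain_apply, Finsupp.mapDomain_single]]
    exact Fintype.sum_equiv (Equiv.addLeft (toAdd a))
      (fun i => Finsupp.single (a * ofAdd i) (↑hinv.unit⁻¹ : R))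
      (fun i => Finsupp.single (ofAdd i) (↑hinv.unit⁻¹ : R))
      (fun i => rfl)
  refine ⟨hinj, hrange, ?_, hequiv, hβinv, s, LinearMap.ext hβs, ?_⟩
  · intro w
    exact ⟨s w, hβs w⟩
  · intro a w
    rw [hs]
    simp only [LinearMap.flip_apply, TensorProduct.mk_apply, TensorProduct.map_tmul,
      LinearMap.id_coe, id_eq]
    rw [hse a]
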